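/- If k is an odd prime, then S(k) = -(k-1)² + 4·∑_{ℓ=1}^{(k-1)/2} ∑_{h=1}^{(k-1)/2} ({2hℓ/k} + {h(2ℓ-1)/k - 1/2}), where {x} denotes the fractional part of x. -/

import Mathlib

lemma negpow_sub_even (a b : ℕ) (hba : b ≤ a) (ha : Even a) :
    (-1:ℤ)^(a-b) = (-1)^b := by
  have h0 : a - b + b = a := by omega
  have h1 : (-1:ℤ)^(a-b) * (-1)^b = 1 := by
    rw [← pow_add, h0]; exact ha.neg_one_pow
  have h2 : (-1:ℤ)^b * (-1)^b = 1 := by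
    rw [← pow_add]; exact Even.neg_one_pow ⟨b, rfl⟩
  calc (-1:ℤ)^(a-b) = (-1)^(a-b) * ((-1)^b * (-1)^b) := by rw [h2, mul_one]
    _ = ((-1)^(a-b) * (-1)^b) * (-1)^b := by ring
    _ = (-1)^b := by rw [h1, one_mul]

lemma natdiv_complement (k a j : ℕ) (ha : a ≤ k) (hnd : ¬ k ∣ a * j) :
    (k - a) * j / k = j - 1 - a * j / k := by
  have hk : 0 < k := by
    rcases Nat.eq_zero_or_pos k with h | h
    · exfalso; subst h
      have ha0 : a = 0 := by omega
      exact hnd (by simp [ha0])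
    · exact h
  set q := a * j / k with hq
  set r := a * j % k with hr
  have hdm : k * q + r = a * j := Nat.div_add_mod (a*j) k
  have hr0 : r ≠ 0 := fun h => hnd (Nat.dvd_of_mod_eq_zero h)
  have hrk : r < k := Nat.mod_lt _ hk
  have hj0 : 0 < j := by
    rcases Nat.eq_zero_or_pos j with h | h
    · subst h; exact absurd (by simpa using Dvd.intro 0 rfl : k ∣ a * 0) hnd
    · exact h
  have haj : a * j < k * j := by
    rcases Nat.lt_or_ge a k with h | h
    · exact (Nat.mul_lt_mul_right hj0).mpr h
    · exfalso; have : a = k := le_antisymm ha h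
      exact hnd (this ▸ Dvd.intro j rfl)
  have hqj : q + 1 ≤ j := by
    have : q < j := Nat.div_lt_of_lt_mul (by linarith [haj])
    omega
  have key : (k - a) * j = (k - r) + (j - 1 - q) * k := by
    zify [ha, le_of_lt hrk, (by omega : q ≤ j - 1), (by omega : (1:ℕ) ≤ j)]
    have hz : (k:ℤ) * q + r = a * j := by exact_mod_cast hdm
    ring_nf
    ring_nf at hz
    linarith [hz]
  rw [key, Nat.add_mul_div_right _ _ hk, Nat.div_eq_of_lt (by omega)]
  omega

lemma fract_natdiv (N k : ℕ) (hk : 0 < k) :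
    Int.fract ((N:ℝ)/k) = ((N % k : ℕ):ℝ)/k := by
  rw [Int.fract_eq_iff]
  have hkR : (0:ℝ) < k := by exact_mod_cast hk
  have hmod : (N % k : ℕ) < k := Nat.mod_lt _ hk
  refine ⟨by positivity, by rw [div_lt_one hkR]; exact_mod_cast hmod, ⟨(N / k : ℕ), ?_⟩⟩
  have hN : (N:ℝ) = (k:ℝ) * (N/k : ℕ) + ((N % k : ℕ):ℝ) := by
    exact_mod_cast (Nat.div_add_mod N k).symm
  rw [hN, add_div, mul_div_cancel_left₀ _ (ne_of_gt hkR), add_sub_cancel_right]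
  norm_cast

lemma two_mul_natdiv (N k : ℕ) (hk : 0 < k) :
    2 * N / k = 2 * (N / k) + 2 * (N % k) / k := by
  conv_lhs => rw [← Nat.div_add_mod N k]
  rw [Nat.mul_add, Nat.mul_left_comm, Nat.mul_comm k, Nat.add_comm,
    Nat.add_mul_div_right _ _ hk]
  omega

lemma fract_sub_half (N k : ℕ) (hko : Odd k) (hnd : ¬ k ∣ N) :
    Int.fract ((N:ℝ)/k - 1/2)
      = Int.fract ((N:ℝ)/k) + ((-1:ℝ))^(2*N/k) / 2 := by
  have hk : 0 < k := hko.pos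
  have hkR : (0:ℝ) < k := by exact_mod_cast hk
  set r := N % k with hrdef
  set q := N / k with hqdef
  have hr0 : r ≠ 0 := fun h => hnd (Nat.dvd_of_mod_eq_zero h)
  have hrk : r < k := Nat.mod_lt _ hk
  have hne : 2 * r ≠ k := by
    intro h; rcases hko with ⟨t, ht⟩; omega
  have hdm : k * q + r = N := Nat.div_add_mod N k
  have hN : (N:ℝ) = (k:ℝ) * q + (r:ℝ) := by exact_mod_cast hdm.symm
  have hfr : Int.fract ((N:ℝ)/k) = (r:ℝ)/k := fract_natdiv N k hk
  have hdiv2 : 2 * N / k = 2 * q + 2 * r / k := two_mul_natdiv N k hk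
  rcases Nat.lt_or_ge (2*r) k with hlt | hgt
  · have h2 : 2 * r / k = 0 := Nat.div_eq_of_lt hlt
    have hpow : ((-1:ℝ))^(2*N/k) = 1 := by
      rw [hdiv2, h2]; exact Even.neg_one_pow ⟨q, by ring⟩
    rw [hfr, hpow]
    rw [Int.fract_eq_iff]
    refine ⟨by positivity, ?_, ⟨(q:ℤ) - 1, ?_⟩⟩
    · have : (r:ℝ)/k < 1/2 := by
        rw [div_lt_div_iff₀ hkR (by norm_num : (0:ℝ) < 2)]
        exact_mod_cast (by omega : r * 2 < 1 * k)
      linarith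
    · rw [hN]; push_cast; field_simp; ring
  · have hgt' : k < 2 * r := lt_of_le_of_ne hgt (Ne.symm hne)
    have h2 : 2 * r / k = 1 := by
      have h1 : 1 ≤ 2*r/k := (Nat.le_div_iff_mul_le hk).mpr (by omega)
      have h3 : 2*r/k < 2 := (Nat.div_lt_iff_lt_mul hk).mpr (by omega)
      omega
    have hpow : ((-1:ℝ))^(2*N/k) = -1 := by
      rw [hdiv2, h2]; exact Odd.neg_one_pow ⟨q, by ring⟩
    rw [hfr, hpow]
    rw [Int.fract_eq_iff]
    have h1 : (1:ℝ)/2 ≤ (r:ℝ)/k := by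
      rw [div_le_div_iff₀ (by norm_num : (0:ℝ) < 2) hkR]
      exact_mod_cast (by omega : 1 * k ≤ r * 2)
    refine ⟨by linarith, ?_, ⟨(q:ℤ), ?_⟩⟩
    · have : (r:ℝ)/k < 1 := by rw [div_lt_one hkR]; exact_mod_cast hrk
      linarith
    · rw [hN]; push_cast; field_simp; ring
/-- `S(h,k) := ∑_{j=1}^{k-1} (-1)^{j+1+⌊hj/k⌋}` (here `h*j/k` is natural-number
division, which agrees with the floor of the rational `hj/k`). -/
def Spair (h k : ℕ) : ℤ := ∑ j ∈ Finset.Icc 1 (k - 1), (-1 : ℤ) ^ (j + 1 + h * j / k)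

/-- `S(k) := ∑_{h=1}^{k-1} S(h,k)`. -/
def Ssum (k : ℕ) : ℤ := ∑ h ∈ Finset.Icc 1 (k - 1), Spair h k

theorem stmt_4 (k : ℕ) (hk : k.Prime) (hodd : Odd k) :
    (Ssum k : ℝ) = -((k : ℝ) - 1) ^ 2 +
      4 * ∑ l ∈ Finset.Icc 1 ((k - 1) / 2), ∑ h ∈ Finset.Icc 1 ((k - 1) / 2),
        (Int.fract (2 * (h : ℝ) * l / k) +
          Int.fract ((h : ℝ) * (2 * (l : ℝ) - 1) / k - 1 / 2)) := by
  obtain ⟨m, hm, hk2⟩ : ∃ m, 1 ≤ m ∧ k = 2*m+1 := by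
    rcases hodd with ⟨t, ht⟩
    have h3 : 3 ≤ k := by
      have := hk.two_le
      rcases Nat.lt_or_ge k 3 with h | h
      · interval_cases k <;> omega
      · exact h
    exact ⟨t, by omega, by omega⟩
  have hk1 : k - 1 = 2*m := by omega
  have hm1 : (k-1)/2 = m := by omega
  have hk0 : 0 < k := by omega
  have hkR : (0:ℝ) < k := by exact_mod_cast hk0
  -- non-divisibility
  have hndvd : ∀ a b : ℕ, 0 < a → a < k → 0 < b → b < k → ¬ k ∣ a * b := by
    intro a b ha1 ha2 hb1 hb2 hdvd
    rcases (Nat.Prime.dvd_mul hk).mp hdvd with h | h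
    · exact absurd (Nat.le_of_dvd ha1 h) (by omega)
    · exact absurd (Nat.le_of_dvd hb1 h) (by omega)
  -- Step 1: pair h with k-h
  have hD : Ssum k = ∑ h ∈ Finset.Icc 1 m, ∑ l ∈ Finset.Icc 1 m,
      2 * (-1:ℤ)^(h*(2*l-1)/k) := by
    have hk1 : k - 1 = 2*m := by omega
    have hk0 : 0 < k := by omega
    -- split the h-range and fold k-h onto 1..m
    have hsplit : Ssum k = ∑ h ∈ Finset.Icc 1 m, (Spair h k + Spair (k-h) k) := by
      rw [Ssum, hk1, Finset.sum_add_distrib]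
      have hunion : Finset.Icc 1 (2*m) = Finset.Icc 1 m ∪ Finset.Icc (m+1) (2*m) := by
        ext x; simp only [Finset.mem_Icc, Finset.mem_union]; omega
      have hdisj : Disjoint (Finset.Icc 1 m) (Finset.Icc (m+1) (2*m)) := by
        simp only [Finset.disjoint_left, Finset.mem_Icc]; omega
      rw [hunion, Finset.sum_union hdisj]
      congr 1
      refine Finset.sum_nbij' (i := fun h => k - h) (j := fun h => k - h) ?_ ?_ ?_ ?_ ?_
      · intro a ha; simp only [Finset.mem_Icc] at *; omega
      · intro a ha; simp only [Finset.mem_Icc] at *; omega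
      · intro a ha; simp only [Finset.mem_Icc] at ha; omega
      · intro a ha; simp only [Finset.mem_Icc] at ha; omega
      · intro a ha; simp only [Finset.mem_Icc] at ha
        congr 1; omega
    rw [hsplit]
    refine Finset.sum_congr rfl ?_
    intro h hh
    simp only [Finset.mem_Icc] at hh
    rw [Spair, Spair, hk1, ← Finset.sum_add_distrib]
    -- per-j rewrite
    have hstep : ∀ j ∈ Finset.Icc 1 (2*m),
        (-1:ℤ)^(j+1+h*j/k) + (-1:ℤ)^(j+1+(k-h)*j/k)
          = ((-1:ℤ)^(j+1) + 1) * (-1:ℤ)^(h*j/k) := by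
      intro j hj
      simp only [Finset.mem_Icc] at hj
      have hnd : ¬ k ∣ h * j := hndvd h j (by omega) (by omega) (by omega) (by omega)
      have hc : (k-h)*j/k = j - 1 - h*j/k := natdiv_complement k h j (by omega) hnd
      have hqlt : h*j/k < j := by
        apply Nat.div_lt_of_lt_mul
        exact (Nat.mul_lt_mul_right (by omega : 0 < j)).mpr (by omega)
      have he : j+1+(k-h)*j/k = 2*j - h*j/k := by rw [hc]; omega
      rw [he, negpow_sub_even (2*j) (h*j/k) (by omega) ⟨j, by ring⟩, pow_add]
      ring
    rw [Finset.sum_congr rfl hstep]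
    -- kill even j, reindex odd j = 2l-1
    rw [← Finset.sum_filter_of_ne (p := fun j => ¬ Even j)
      (f := fun j => ((-1:ℤ)^(j+1) + 1) * (-1:ℤ)^(h*j/k)) (by
        intro j hj hne heven
        apply hne
        show ((-1:ℤ)^(j+1) + 1) * (-1:ℤ)^(h*j/k) = 0
        have : (-1:ℤ)^(j+1) = -1 := Odd.neg_one_pow (Even.add_one heven)
        rw [this]; ring)]
    refine Finset.sum_nbij' (i := fun j => (j+1)/2) (j := fun l => 2*l-1) ?_ ?_ ?_ ?_ ?_
    · intro a ha
      simp only [Finset.mem_filter, Finset.mem_Icc, Nat.even_iff] at ha ⊢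
      omega
    · intro a ha
      simp only [Finset.mem_filter, Finset.mem_Icc, Nat.even_iff] at ha ⊢
      omega
    · intro a ha
      simp only [Finset.mem_filter, Finset.mem_Icc, Nat.even_iff] at ha
      omega
    · intro a ha
      simp only [Finset.mem_Icc, Nat.even_iff] at ha ⊢
      omega
    · intro a ha
      simp only [Finset.mem_filter, Finset.mem_Icc, Nat.even_iff] at ha
      have h1 : (-1:ℤ)^(a+1) = 1 := Even.neg_one_pow (by rw [Nat.even_iff]; omega)
      have h2 : 2*((a+1)/2)-1 = a := by omega
      rw [h1, h2]
      ring
  -- Step 2: reindex h ↦ ±2h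
  have hE : ∀ l ∈ Finset.Icc 1 m, ∑ h ∈ Finset.Icc 1 m, (-1:ℤ)^(h*(2*l-1)/k)
      = ∑ h ∈ Finset.Icc 1 m, (-1:ℤ)^(2*(h*(2*l-1))/k) := by
    intro l hl
    simp only [Finset.mem_Icc] at hl
    refine (Finset.sum_nbij' (i := fun h => if 2*h ≤ m then 2*h else k - 2*h)
      (j := fun h => if Even h then h/2 else (k-h)/2) ?_ ?_ ?_ ?_ ?_).symm
    · intro a ha
      split_ifs <;> simp only [Finset.mem_Icc, Nat.even_iff] at * <;> omega
    · intro a ha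
      split_ifs <;> simp only [Finset.mem_Icc, Nat.even_iff] at * <;> omega
    · intro a ha; simp only [Finset.mem_Icc] at ha
      split_ifs <;> simp only [Nat.even_iff] at * <;> omega
    · intro a ha; simp only [Finset.mem_Icc] at ha
      split_ifs <;> simp only [Nat.even_iff] at * <;> omega
    · intro a ha; simp only [Finset.mem_Icc] at ha
      set n := 2*l-1 with hn
      have hn1 : 1 ≤ n := by omega
      have hnk : n < k := by omega
      rcases le_or_gt (2*a) m with hle | hlt
      · rw [if_pos hle]
        congr 1
        rw [← Nat.mul_assoc]
      · rw [if_neg (by omega)]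
        have hnd : ¬ k ∣ (2*a) * n := hndvd (2*a) n (by omega) (by omega) (by omega) (by omega)
        have hc : (k - 2*a) * n / k = n - 1 - (2*a)*n/k := natdiv_complement k (2*a) n (by omega) hnd
        have hqlt : (2*a)*n/k < n := by
          apply Nat.div_lt_of_lt_mul
          exact (Nat.mul_lt_mul_right (by omega : 0 < n)).mpr (by omega)
        rw [hc, negpow_sub_even (n-1) ((2*a)*n/k) (by omega) ⟨l-1, by omega⟩]
        congr 1
        rw [← Nat.mul_assoc]
  -- Step 3: the m² identity
  have hM : ∀ h ∈ Finset.Icc 1 m, ∑ l ∈ Finset.Icc 1 m,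
      (Int.fract (((2*h*l:ℕ):ℝ)/k) + Int.fract (((h*(2*l-1):ℕ):ℝ)/k)) = (m:ℝ) := by
    intro h hh
    simp only [Finset.mem_Icc] at hh
    have hk0 : 0 < k := by omega
    have hkR : (0:ℝ) < k := by exact_mod_cast hk0
    have key : ∑ l ∈ Finset.Icc 1 m, Int.fract (((2*h*l:ℕ):ℝ)/k)
        = ∑ l ∈ Finset.Icc 1 m, (1 - Int.fract (((h*(2*l-1):ℕ):ℝ)/k)) := by
      refine Finset.sum_nbij' (i := fun l => m+1-l) (j := fun l => m+1-l) ?_ ?_ ?_ ?_ ?_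
      · intro a ha; simp only [Finset.mem_Icc] at *; omega
      · intro a ha; simp only [Finset.mem_Icc] at *; omega
      · intro a ha; simp only [Finset.mem_Icc] at ha; omega
      · intro a ha; simp only [Finset.mem_Icc] at ha; omega
      · intro a ha; simp only [Finset.mem_Icc] at ha
        have e1 : 2*(m+1-a)-1 = k - 2*a := by omega
        rw [e1]
        -- h*(k-2a)/k = h - (2*h*a)/k, fract of which is 1 - fract(2ha/k)
        have e2 : ((h*(k-2*a):ℕ):ℝ)/k = ((h:ℤ):ℝ) + (-( ((2*h*a:ℕ):ℝ)/k)) := by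
          push_cast [Nat.cast_sub (by omega : 2*a ≤ k)]
          field_simp
          ring
        have hnd : ¬ k ∣ 2*h*a := by
          have : 2*h*a = (2*h)*a := by ring
          rw [this]
          exact hndvd (2*h) a (by omega) (by omega) (by omega) (by omega)
        have hfr0 : Int.fract (((2*h*a:ℕ):ℝ)/k) ≠ 0 := by
          rw [fract_natdiv _ _ hk0]
          have hne : (2*h*a) % k ≠ 0 := fun hc => hnd (Nat.dvd_of_mod_eq_zero hc)
          positivity
        rw [e2, Int.fract_intCast_add, Int.fract_neg hfr0]
        ring
    rw [Finset.sum_add_distrib, key, Finset.sum_sub_distrib]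
    simp
  -- rewrite RHS per-term
  have hterm : ∀ l ∈ Finset.Icc 1 m, ∀ h ∈ Finset.Icc 1 m,
      Int.fract (2 * (h : ℝ) * l / k) + Int.fract ((h : ℝ) * (2 * (l : ℝ) - 1) / k - 1 / 2)
      = (Int.fract (((2*h*l:ℕ):ℝ)/k) + Int.fract (((h*(2*l-1):ℕ):ℝ)/k))
        + ((-1:ℝ))^(2*(h*(2*l-1))/k) / 2 := by
    intro l hl h hh
    simp only [Finset.mem_Icc] at hl hh
    have hA : 2 * (h : ℝ) * l / k = ((2*h*l:ℕ):ℝ)/k := by push_cast; ring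
    have hBc : (h : ℝ) * (2 * (l : ℝ) - 1) / k = ((h*(2*l-1):ℕ):ℝ)/k := by
      push_cast [Nat.cast_sub (by omega : 1 ≤ 2*l)]; ring
    have hnd : ¬ k ∣ h*(2*l-1) := hndvd h (2*l-1) (by omega) (by omega) (by omega) (by omega)
    rw [hA, hBc, fract_sub_half _ _ hodd hnd]
    ring
  -- integer form of Ssum
  have hZ : Ssum k = 2 * ∑ l ∈ Finset.Icc 1 m, ∑ h ∈ Finset.Icc 1 m,
      (-1:ℤ)^(2*(h*(2*l-1))/k) := by
    rw [hD, Finset.sum_comm, Finset.mul_sum]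
    refine Finset.sum_congr rfl ?_
    intro l hl
    rw [← hE l hl, Finset.mul_sum]
  have hZR : (Ssum k : ℝ) = 2 * ∑ l ∈ Finset.Icc 1 m, ∑ h ∈ Finset.Icc 1 m,
      ((-1:ℝ))^(2*(h*(2*l-1))/k) := by
    rw [hZ]; push_cast; ring
  rw [hm1]
  rw [Finset.sum_congr rfl (fun l hl => Finset.sum_congr rfl (hterm l hl))]
  have e1 : ∀ l ∈ Finset.Icc 1 m,
      ∑ h ∈ Finset.Icc 1 m,
        ((Int.fract (((2*h*l:ℕ):ℝ)/k) + Int.fract (((h*(2*l-1):ℕ):ℝ)/k))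
          + ((-1:ℝ))^(2*(h*(2*l-1))/k)/2)
      = (∑ h ∈ Finset.Icc 1 m,
          (Int.fract (((2*h*l:ℕ):ℝ)/k) + Int.fract (((h*(2*l-1):ℕ):ℝ)/k)))
        + (∑ h ∈ Finset.Icc 1 m, ((-1:ℝ))^(2*(h*(2*l-1))/k))/2 := by
    intro l hl
    rw [Finset.sum_add_distrib, Finset.sum_div]
  rw [Finset.sum_congr rfl e1, Finset.sum_add_distrib, ← Finset.sum_div]
  have hF : ∑ l ∈ Finset.Icc 1 m, ∑ h ∈ Finset.Icc 1 m,
      (Int.fract (((2*h*l:ℕ):ℝ)/k) + Int.fract (((h*(2*l-1):ℕ):ℝ)/k)) = (m:ℝ)*m := by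
    rw [Finset.sum_comm, Finset.sum_congr rfl hM, Finset.sum_const, Nat.card_Icc]
    simp [mul_comm]
  rw [hF, hZR]
  have hkm : (k:ℝ) = 2*(m:ℝ)+1 := by exact_mod_cast hk2
  rw [hkm]
  ring
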